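/- Let δ, κ, λ > 0 and μ ≥ 0 with δλ − κ > 0, suppose δ/(2κ) < √((κ + δμ)/(δ(δλ − κ))), let α be the unique solution in (0, ∞) of tanh(√(2δ)·α) = δ(δ − 2κα) / (√(2δ)(δ(δλ − κ)α² − (κ + δμ))), set A = (δ(δλ − κ)α² − (κ + δμ))/(δ² cosh(√(2δ)α)) (which is negative in this case), and define u(x) = A cosh(√(2δ)x) + (κ/δ)x² + (κ + δμ)/δ² for x ∈ [0, α]. Then the following three conditions are equivalent: (i) |u'(x)| ≤ 1 for all x ∈ [0, α]; (ii) α ≥ √(μ/(δλ − κ)); (iii) tanh(√(2δμ/(δλ − κ))) ≥ √(2δμ/(δλ − κ)) − δ²/(κ√(2δ)). -/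

import Mathlib

/-- `tanh` is 1-Lipschitz (one-sided form). -/
lemma tanh_lip_aux (a b : ℝ) (hab : a ≤ b) : Real.tanh b - Real.tanh a ≤ b - a := by
  have key : ∀ y : ℝ, HasDerivAt (fun t => t - Real.tanh t) (1 - 1/(Real.cosh y)^2) y := by
    intro y
    have h1 : HasDerivAt Real.sinh (Real.cosh y) y := Real.hasDerivAt_sinh y
    have h2 : HasDerivAt Real.cosh (Real.sinh y) y := Real.hasDerivAt_cosh y
    have hc : Real.cosh y ≠ 0 := (Real.cosh_pos y).ne'
    have h3 := h1.div h2 hc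
    have h4 : (Real.cosh y * Real.cosh y - Real.sinh y * Real.sinh y)/(Real.cosh y)^2
        = 1/(Real.cosh y)^2 := by
      rw [show Real.cosh y * Real.cosh y - Real.sinh y * Real.sinh y
          = Real.cosh y ^2 - Real.sinh y ^2 by ring, Real.cosh_sq_sub_sinh_sq]
    rw [h4] at h3
    have h5 := (hasDerivAt_id y).sub h3
    simp only [Real.tanh_eq_sinh_div_cosh, id_eq] at h5 ⊢
    exact h5
  have mono : Monotone (fun t => t - Real.tanh t) := by
    apply monotone_of_deriv_nonneg
    · exact fun y => (key y).differentiableAt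
    · intro y
      rw [(key y).deriv]
      have h6 : 1 ≤ (Real.cosh y)^2 := by nlinarith [Real.cosh_sq' y, sq_nonneg (Real.sinh y)]
      have h7 : 1/(Real.cosh y)^2 ≤ 1 := by
        rw [div_le_one (by positivity)]; exact h6
      linarith
  have := mono hab
  simp only at this
  linarith

set_option maxHeartbeats 1000000 in
/-- In the case `δ/(2κ) < √((κ + δμ)/(δ(δλ − κ)))`, with `α` the unique positive root
of `tanh(√(2δ)·α) = δ(δ − 2κα)/(√(2δ)(δ(δλ − κ)α² − (κ + δμ)))` and
`A = (δ(δλ − κ)α² − (κ + δμ))/(δ² cosh(√(2δ)α))` (which is negative in this case),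
let `u(x) = A cosh(√(2δ)x) + (κ/δ)x² + (κ + δμ)/δ²`. Then the following three
conditions are equivalent: (i) `|u'(x)| ≤ 1` for all `x ∈ [0, α]`;
(ii) `α ≥ √(μ/(δλ − κ))`;
(iii) `tanh(√(2δμ/(δλ − κ))) ≥ √(2δμ/(δλ − κ)) − δ²/(κ√(2δ))`. -/
theorem statement13 (δ κ lam μ α A : ℝ) (hδ : 0 < δ) (hκ : 0 < κ) (hlam : 0 < lam)
    (hμ : 0 ≤ μ) (h : 0 < δ*lam - κ)
    (hord : δ/(2*κ) < Real.sqrt ((κ + δ*μ)/(δ*(δ*lam - κ)))) (hα : 0 < α)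
    (heq : Real.tanh (Real.sqrt (2*δ) * α) =
      δ*(δ - 2*κ*α) / (Real.sqrt (2*δ) * (δ*(δ*lam - κ)*α^2 - (κ + δ*μ))))
    (hA : A = (δ*(δ*lam - κ)*α^2 - (κ + δ*μ)) / (δ^2 * Real.cosh (Real.sqrt (2*δ) * α)))
    (u : ℝ → ℝ)
    (hu : ∀ x : ℝ, u x = A * Real.cosh (Real.sqrt (2*δ) * x) + (κ/δ) * x^2 + (κ + δ*μ)/δ^2) :
    A < 0 ∧
    ((∀ x : ℝ, 0 ≤ x → x ≤ α → |deriv u x| ≤ 1) ↔ Real.sqrt (μ/(δ*lam - κ)) ≤ α) ∧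
    (Real.sqrt (μ/(δ*lam - κ)) ≤ α ↔
      Real.sqrt (2*δ*μ/(δ*lam - κ)) - δ^2/(κ * Real.sqrt (2*δ)) ≤
        Real.tanh (Real.sqrt (2*δ*μ/(δ*lam - κ)))) := by
  have h2δ : (0:ℝ) ≤ 2*δ := by linarith
  set s := Real.sqrt (2*δ) with hs_def
  set D := δ*(δ*lam - κ)*α^2 - (κ + δ*μ) with hD_def
  have hs : 0 < s := Real.sqrt_pos.mpr (by linarith)
  have hs2 : s^2 = 2*δ := Real.sq_sqrt h2δ
  have hch : 0 < Real.cosh (s*α) := Real.cosh_pos _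
  have hT : 0 < Real.tanh (s*α) := by
    rw [Real.tanh_eq_sinh_div_cosh]
    exact div_pos (Real.sinh_pos_iff.mpr (by positivity)) hch
  -- D ≠ 0
  have hD0 : D ≠ 0 := by
    intro h0
    rw [h0, mul_zero, div_zero] at heq
    linarith [hT, heq]
  -- key cross-multiplied identity
  have hkey : Real.tanh (s*α) * (s * D) = δ*(δ - 2*κ*α) := by
    rw [heq]
    field_simp
  -- D < 0
  have hDneg : D < 0 := by
    rcases lt_or_gt_of_ne hD0 with h1 | h1
    · exact h1
    exfalso
    have hp : 0 < δ*(δ - 2*κ*α) := by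
      rw [← hkey]; exact mul_pos hT (mul_pos hs h1)
    have h2 : α < δ/(2*κ) := by
      rw [lt_div_iff₀ (by linarith)]
      nlinarith
    have h3 : α < Real.sqrt ((κ + δ*μ)/(δ*(δ*lam - κ))) := lt_trans h2 hord
    have h4 : α^2 < (κ + δ*μ)/(δ*(δ*lam - κ)) := (Real.lt_sqrt hα.le).mp h3
    have h5 : α^2 * (δ*(δ*lam - κ)) < κ + δ*μ := (lt_div_iff₀ (by positivity)).mp h4
    rw [hD_def] at h1
    nlinarith
  -- A < 0
  have hAneg : A < 0 := by
    rw [hA]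
    exact div_neg_of_neg_of_pos hDneg (by positivity)
  -- δ < 2κα
  have h2κα : δ < 2*κ*α := by
    have hneg : δ*(δ - 2*κ*α) < 0 := by
      rw [← hkey]
      exact mul_neg_of_pos_of_neg hT (mul_neg_of_pos_of_neg hs hDneg)
    nlinarith
  -- equivalence (ii) ↔ -κ ≤ D
  have hEquiv : Real.sqrt (μ/(δ*lam - κ)) ≤ α ↔ -κ ≤ D := by
    constructor
    · intro hle
      have hq : 0 ≤ μ/(δ*lam - κ) := div_nonneg hμ h.le
      have h1 : μ/(δ*lam - κ) ≤ α^2 := by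
        have := pow_le_pow_left₀ (Real.sqrt_nonneg _) hle 2
        rwa [Real.sq_sqrt hq] at this
      have h2 : μ ≤ α^2 * (δ*lam - κ) := (div_le_iff₀ h).mp h1
      rw [hD_def]
      nlinarith
    · intro hD2
      rw [hD_def] at hD2
      have h2 : μ ≤ α^2 * (δ*lam - κ) := by nlinarith
      have h1 : μ/(δ*lam - κ) ≤ α^2 := (div_le_iff₀ h).mpr h2
      calc Real.sqrt (μ/(δ*lam - κ)) ≤ Real.sqrt (α^2) := Real.sqrt_le_sqrt h1
        _ = α := Real.sqrt_sq hα.le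
  -- equivalence: s*α - δ²/(κs) ≤ tanh(s*α) ↔ -κ ≤ D
  have hc : δ^2/(κ*s)*(κ*s) = δ^2 := div_mul_cancel₀ _ (by positivity)
  have hexp : (Real.tanh (s*α) - (s*α - δ^2/(κ*s))) * (κ*s*(-D))
      = δ*(2*κ*α - δ)*(κ + D) := by
    have e1 : Real.tanh (s*α) * (κ*s*(-D)) = -κ * (δ*(δ - 2*κ*α)) := by
      rw [← hkey]; ring
    linear_combination e1 + (κ*α*D)*hs2 + (-D)*hc
  have hpos : 0 < κ*s*(-D) := by
    have : 0 < -D := by linarith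
    positivity
  have hphiA : s*α - δ^2/(κ*s) ≤ Real.tanh (s*α) ↔ -κ ≤ D := by
    constructor
    · intro h1
      have h2 : 0 ≤ (Real.tanh (s*α) - (s*α - δ^2/(κ*s))) * (κ*s*(-D)) :=
        mul_nonneg (by linarith) hpos.le
      rw [hexp] at h2
      nlinarith [mul_pos hδ (show (0:ℝ) < 2*κ*α - δ by linarith)]
    · intro h2
      have h3 : 0 ≤ δ*(2*κ*α - δ)*(κ + D) := by
        apply mul_nonneg (mul_nonneg hδ.le (by linarith)) (by linarith)
      rw [← hexp] at h3
      have h4 := (mul_nonneg_iff_of_pos_right hpos).mp h3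
      linarith
  -- derivative of u
  have hg : ∀ x : ℝ, HasDerivAt u (A*s*Real.sinh (s*x) + 2*(κ/δ)*x) x := by
    intro x
    have hfun : u = fun x => A * Real.cosh (s*x) + (κ/δ) * x^2 + (κ + δ*μ)/δ^2 :=
      funext hu
    rw [hfun]
    have h1 : HasDerivAt (fun x:ℝ => s*x) s x := by
      simpa using (hasDerivAt_id x).const_mul s
    have h2 := (h1.cosh.const_mul A).add
      (((hasDerivAt_pow 2 x).const_mul (κ/δ)).add_const ((κ + δ*μ)/δ^2))
    refine (h2.congr_deriv ?_).congr_of_eventuallyEq (Filter.Eventually.of_forall fun t => ?_)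
    · simp only [Nat.cast_ofNat, show (2:ℕ) - 1 = 1 from rfl, pow_one]; ring
    · simp only [Pi.add_apply]; ring
  set g : ℝ → ℝ := fun x => A*s*Real.sinh (s*x) + 2*(κ/δ)*x with hg_def
  have hderiv : deriv u = g := funext fun x => (hg x).deriv
  set G : ℝ → ℝ := fun x => A*s^2*Real.cosh (s*x) + 2*(κ/δ) with hG_def
  have hgG : ∀ x : ℝ, HasDerivAt g (G x) x := by
    intro x
    have h1 : HasDerivAt (fun x:ℝ => s*x) s x := by
      simpa using (hasDerivAt_id x).const_mul s
    have h2 := (h1.sinh.const_mul (A*s)).add ((hasDerivAt_id x).const_mul (2*(κ/δ)))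
    refine h2.congr_deriv ?_
    rw [hG_def]; ring
  have hgcont : Continuous g := by
    have : ∀ x : ℝ, HasDerivAt u (g x) x := hg
    fun_prop
  -- G is antitone on nonneg reals
  have hGanti : ∀ x y : ℝ, 0 ≤ x → x ≤ y → G y ≤ G x := by
    intro x y hx hxy
    have hcosh_le : Real.cosh (s*x) ≤ Real.cosh (s*y) := by
      rw [Real.cosh_le_cosh, abs_of_nonneg (by positivity), abs_of_nonneg (by nlinarith)]
      nlinarith
    rw [hG_def]
    have hAs : A*s^2 < 0 := mul_neg_of_neg_of_pos hAneg (by positivity)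
    nlinarith
  -- value of G at α
  have hsinh : s * D * Real.sinh (s*α) = δ*(δ - 2*κ*α) * Real.cosh (s*α) := by
    have h1 := hkey
    rw [Real.tanh_eq_sinh_div_cosh] at h1
    field_simp at h1
    linarith [h1]
  have hGα : G α = 2*(D + κ)/δ := by
    rw [hG_def, hA, hs2]
    field_simp
  have hg0 : g 0 = 0 := by simp [hg_def]
  have hgα : g α = 1 := by
    rw [hg_def, hA]
    have hδ2 : (δ:ℝ)^2 ≠ 0 := by positivity
    field_simp
    nlinarith [hsinh]
  -- part (i) ↔ (ii)
  have hpart2 : (∀ x : ℝ, 0 ≤ x → x ≤ α → |g x| ≤ 1) ↔ Real.sqrt (μ/(δ*lam - κ)) ≤ α := by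
    rw [hEquiv]
    constructor
    · intro hi
      by_contra hcon
      push_neg at hcon
      have hGαneg : G α < 0 := by
        rw [hGα]
        apply div_neg_of_neg_of_pos (by linarith) hδ
      have hGc : Continuous G := by
        apply Continuous.add _ continuous_const
        exact continuous_const.mul (Real.continuous_cosh.comp (continuous_const.mul continuous_id))
      have hev : ∀ᶠ t in nhdsWithin α (Set.Iio α), G t < 0 ∧ 0 < t := by
        apply Filter.Eventually.filter_mono nhdsWithin_le_nhds
        exact (hGc.continuousAt.eventually_lt continuousAt_const hGαneg).and
          (eventually_gt_nhds hα)
      obtain ⟨x₀, ⟨hGx₀, hx₀pos⟩, hx₀lt⟩ := (hev.and eventually_mem_nhdsWithin).exists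
      have hanti : StrictAntiOn g (Set.Icc x₀ α) := by
        apply strictAntiOn_of_deriv_neg (convex_Icc _ _) hgcont.continuousOn
        intro t ht
        rw [interior_Icc] at ht
        rw [(hgG t).deriv]
        exact lt_of_le_of_lt (hGanti x₀ t hx₀pos.le ht.1.le) hGx₀
      have hgt : 1 < g x₀ := by
        have := hanti (Set.mem_Icc.mpr ⟨le_refl _, hx₀lt.le⟩)
          (Set.mem_Icc.mpr ⟨hx₀lt.le, le_refl _⟩) hx₀lt
        rwa [hgα] at this
      have := hi x₀ hx₀pos.le hx₀lt.le
      rw [abs_le] at this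
      linarith [this.2]
    · intro hD2 x hx0 hxα
      have hGnonneg : ∀ t ∈ Set.Icc (0:ℝ) α, 0 ≤ G t := by
        intro t ht
        have h1 : G α ≤ G t := hGanti t α ht.1 ht.2
        have h2 : 0 ≤ G α := by
          rw [hGα]
          apply div_nonneg (by linarith) hδ.le
        linarith
      have hmono : MonotoneOn g (Set.Icc 0 α) := by
        apply monotoneOn_of_deriv_nonneg (convex_Icc _ _) hgcont.continuousOn
        · intro t ht
          exact (hgG t).differentiableAt.differentiableWithinAt
        · intro t ht
          rw [interior_Icc] at ht
          rw [(hgG t).deriv]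
          exact hGnonneg t ⟨ht.1.le, ht.2.le⟩
      have h1 : g 0 ≤ g x := hmono (Set.mem_Icc.mpr ⟨le_refl _, hα.le⟩)
        (Set.mem_Icc.mpr ⟨hx0, hxα⟩) hx0
      have h2 : g x ≤ g α := hmono (Set.mem_Icc.mpr ⟨hx0, hxα⟩)
        (Set.mem_Icc.mpr ⟨hα.le, le_refl _⟩) hxα
      rw [hg0] at h1
      rw [hgα] at h2
      rw [abs_le]
      constructor <;> linarith
  refine ⟨hAneg, ?_, ?_⟩
  · rw [hderiv]
    exact hpart2
  -- part (ii) ↔ (iii)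
  · have hβ : Real.sqrt (2*δ*μ/(δ*lam - κ)) = s * Real.sqrt (μ/(δ*lam - κ)) := by
      rw [hs_def, show 2*δ*μ/(δ*lam - κ) = (2*δ)*(μ/(δ*lam - κ)) by ring,
        Real.sqrt_mul h2δ]
    rw [hβ]
    set q := Real.sqrt (μ/(δ*lam - κ)) with hq_def
    have hqnn : 0 ≤ q := Real.sqrt_nonneg _
    constructor
    · intro hii
      have hD2 : -κ ≤ D := hEquiv.mp hii
      have h1 : s*α - δ^2/(κ*s) ≤ Real.tanh (s*α) := hphiA.mpr hD2
      have hβle : s*q ≤ s*α := mul_le_mul_of_nonneg_left hii hs.le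
      have hlip := tanh_lip_aux (s*q) (s*α) hβle
      linarith
    · intro hiii
      by_contra hcon
      push_neg at hcon
      have hD2 : D < -κ := by
        by_contra hc2
        push_neg at hc2
        exact absurd (hEquiv.mpr hc2) (not_le.mpr hcon)
      have h1 : Real.tanh (s*α) < s*α - δ^2/(κ*s) := by
        by_contra hc3
        push_neg at hc3
        linarith [hphiA.mp hc3]
      have hβgt : s*α ≤ s*q := mul_le_mul_of_nonneg_left hcon.le hs.le
      have hlip := tanh_lip_aux (s*α) (s*q) hβgt
      linarith
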